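/- (Reduction from three species to one when a13 = 0.) Suppose a13 = 0, a12 ≠ 0, a23 ≠ 0, and x1, x2, x3 : ℝ → ℝ are continuously differentiable and solve the 3-species GLV system on [0,∞) with x1(t), x2(t), x3(t) > 0 for all t ≥ 0. Define y2(t) := (1/a12)·((ẋ1(t) − b1·x1(t))/x1(t) − a11·x1(t)). Then x1 is twice differentiable on [0,∞), x2 = y2 on [0,∞), y2 is differentiable, and, defining y3(t) := (1/a23)·((ẏ2(t) − b2·y2(t))/y2(t) − a21·x1(t) − a22·y2(t)), χ3(t) := x3(0) + ∫₀ᵗ [b3·y3(τ) + (a31·x1(τ) + a32·y2(τ) + a33·y3(τ))·y3(τ)] dτ, and χ2(t) := x2(0) + ∫₀ᵗ [b2·y2(τ) + (a21·x1(τ) + a22·y2(τ) + a23·χ3(τ))·y2(τ)] dτ, the function x1 satisfies the single reduced equation ẋ1(t) = b1·x1(t) + (a11·x1(t) + a12·χ2(t))·x1(t) for all t ≥ 0. -/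

import Mathlib

/-- (Reduction from three species to one when `a13 = 0`.) Suppose
`a13 = 0`, `a12 ≠ 0`, `a23 ≠ 0`, and `x1, x2, x3` are continuously differentiable, positive,
solutions of the 3-species GLV system on `[0,∞)`. With `y2, y3, χ3, χ2` as defined below,
`x1` is twice differentiable on `[0,∞)`, `x2 = y2` on `[0,∞)`, `y2` is differentiable, and
`x1` satisfies the single reduced equation `ẋ1 = b1·x1 + (a11·x1 + a12·χ2)·x1` on `[0,∞)`. -/
theorem glv3_reduction_to_one
    (b1 b2 b3 a11 a12 a13 a21 a22 a23 a31 a32 a33 : ℝ)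
    (ha13 : a13 = 0) (ha12 : a12 ≠ 0) (ha23 : a23 ≠ 0)
    (x1 x2 x3 : ℝ → ℝ)
    (hx1 : ContDiff ℝ 1 x1) (hx2 : ContDiff ℝ 1 x2) (hx3 : ContDiff ℝ 1 x3)
    (hpos1 : ∀ t : ℝ, 0 ≤ t → 0 < x1 t)
    (hpos2 : ∀ t : ℝ, 0 ≤ t → 0 < x2 t)
    (hpos3 : ∀ t : ℝ, 0 ≤ t → 0 < x3 t)
    (hode1 : ∀ t : ℝ, 0 ≤ t →
      deriv x1 t = b1 * x1 t + (a11 * x1 t + a12 * x2 t + a13 * x3 t) * x1 t)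
    (hode2 : ∀ t : ℝ, 0 ≤ t →
      deriv x2 t = b2 * x2 t + (a21 * x1 t + a22 * x2 t + a23 * x3 t) * x2 t)
    (hode3 : ∀ t : ℝ, 0 ≤ t →
      deriv x3 t = b3 * x3 t + (a31 * x1 t + a32 * x2 t + a33 * x3 t) * x3 t)
    (y2 y3 χ3 χ2 : ℝ → ℝ)
    (hy2 : ∀ t : ℝ, y2 t = (1 / a12) * ((deriv x1 t - b1 * x1 t) / x1 t - a11 * x1 t))
    (hy3 : ∀ t : ℝ, y3 t = (1 / a23) *
      ((derivWithin y2 (Set.Ici 0) t - b2 * y2 t) / y2 t - a21 * x1 t - a22 * y2 t))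
    (hχ3 : ∀ t : ℝ, χ3 t = x3 0 + ∫ τ in (0:ℝ)..t,
      (b3 * y3 τ + (a31 * x1 τ + a32 * y2 τ + a33 * y3 τ) * y3 τ))
    (hχ2 : ∀ t : ℝ, χ2 t = x2 0 + ∫ τ in (0:ℝ)..t,
      (b2 * y2 τ + (a21 * x1 τ + a22 * y2 τ + a23 * χ3 τ) * y2 τ)) :
    DifferentiableOn ℝ (deriv x1) (Set.Ici 0) ∧
    (∀ t : ℝ, 0 ≤ t → x2 t = y2 t) ∧
    DifferentiableOn ℝ y2 (Set.Ici 0) ∧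
    (∀ t : ℝ, 0 ≤ t →
      deriv x1 t = b1 * x1 t + (a11 * x1 t + a12 * χ2 t) * x1 t) := by
  have hx1d := hx1.differentiable one_ne_zero
  have hx2d := hx2.differentiable one_ne_zero
  have hx3d := hx3.differentiable one_ne_zero
  have key1 : ∀ t : ℝ, 0 ≤ t → y2 t = x2 t := by
    intro t ht
    have h1 : x1 t ≠ 0 := (hpos1 t ht).ne'
    rw [hy2, hode1 t ht, ha13]
    field_simp
    ring
  have hy2diff : DifferentiableOn ℝ y2 (Set.Ici 0) :=
    hx2d.differentiableOn.congr fun t ht => key1 t ht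
  have hdw : ∀ t : ℝ, 0 ≤ t → derivWithin y2 (Set.Ici 0) t = deriv x2 t := by
    intro t ht
    have hu : UniqueDiffWithinAt ℝ (Set.Ici (0:ℝ)) t := uniqueDiffOn_Ici 0 t ht
    have h : derivWithin y2 (Set.Ici 0) t = derivWithin x2 (Set.Ici 0) t :=
      derivWithin_congr (fun s hs => key1 s hs) (key1 t ht)
    rw [h, (hx2d t).derivWithin hu]
  have key3 : ∀ t : ℝ, 0 ≤ t → y3 t = x3 t := by
    intro t ht
    have h2 : x2 t ≠ 0 := (hpos2 t ht).ne'
    rw [hy3, hdw t ht, key1 t ht, hode2 t ht]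
    field_simp
    ring
  have hχ3x : ∀ t : ℝ, 0 ≤ t → χ3 t = x3 t := by
    intro t ht
    rw [hχ3]
    have hcong : ∀ τ ∈ Set.uIcc (0:ℝ) t,
        (b3 * y3 τ + (a31 * x1 τ + a32 * y2 τ + a33 * y3 τ) * y3 τ) = deriv x3 τ := by
      intro τ hτ
      rw [Set.uIcc_of_le ht] at hτ
      rw [key1 τ hτ.1, key3 τ hτ.1, hode3 τ hτ.1]
    rw [intervalIntegral.integral_congr hcong,
      intervalIntegral.integral_deriv_eq_sub (fun τ _ => hx3d τ)
        ((hx3.continuous_deriv le_rfl).intervalIntegrable 0 t)]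
    ring
  have hχ2x : ∀ t : ℝ, 0 ≤ t → χ2 t = x2 t := by
    intro t ht
    rw [hχ2]
    have hcong : ∀ τ ∈ Set.uIcc (0:ℝ) t,
        (b2 * y2 τ + (a21 * x1 τ + a22 * y2 τ + a23 * χ3 τ) * y2 τ) = deriv x2 τ := by
      intro τ hτ
      rw [Set.uIcc_of_le ht] at hτ
      rw [key1 τ hτ.1, hχ3x τ hτ.1, hode2 τ hτ.1]
    rw [intervalIntegral.integral_congr hcong,
      intervalIntegral.integral_deriv_eq_sub (fun τ _ => hx2d τ)
        ((hx2.continuous_deriv le_rfl).intervalIntegrable 0 t)]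
    ring
  refine ⟨?_, fun t ht => (key1 t ht).symm, hy2diff, fun t ht => ?_⟩
  · have hf : Differentiable ℝ (fun t => b1 * x1 t + (a11 * x1 t + a12 * x2 t + a13 * x3 t) * x1 t) := by
      fun_prop
    exact hf.differentiableOn.congr fun t ht => hode1 t ht
  · rw [hode1 t ht, ha13, hχ2x t ht]
    ring
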